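/- Let E be a finite set, let w assign to each element of E a finite multiset over N = {0,...,k}, and let 𝒮 be a nonempty collection of subsets of E. For S in 𝒮, let W(S) be the multiset disjoint union of w(e) over e in S, and let F(S) = sum over e in S of f(w(e)) in ℕ^{k+1}. Then a solution S in 𝒮 minimizes W(S) with respect to the max-min-fair comparison ⊑mmf (i.e., W(S) ⊑mmf W(S') for all S' in 𝒮) if and only if S minimizes F(S) with respect to the lexicographic order on ℕ^{k+1} (i.e., F(S) ≤lex F(S') for all S' in 𝒮). -/

import Mathlib

/-- Strict lexicographic order on vectors `ℕ^{k+1}` read from the first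
coordinate. -/
def VecLexLt {m : ℕ} (s t : Fin m → ℕ) : Prop :=
  ∃ j : Fin m, (∀ i, i < j → s i = t i) ∧ s j < t j

/-- Lexicographic order `≤lex` on vectors `ℕ^{k+1}`. -/
def VecLexLe {m : ℕ} (s t : Fin m → ℕ) : Prop :=
  s = t ∨ VecLexLt s t

/-- Max-min-fair comparison `u ⊑mmf v` of finite multisets over `ℕ`:
the non-increasing listing of `u` equals that of `v`, or is a proper prefix of
it, or has the smaller entry at the first differing position
(`List.Lex (· < ·)`). -/
def MmfLe (u v : Multiset ℕ) : Prop :=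
  Multiset.sort u (· ≥ ·) = Multiset.sort v (· ≥ ·) ∨
    List.Lex (· < ·) (Multiset.sort u (· ≥ ·)) (Multiset.sort v (· ≥ ·))

/-- `f(w e) = (m_k, ..., m_0)`: the vector of multiplicities of `k, ..., 0`. -/
def multVec (k : ℕ) (u : Multiset ℕ) : Fin (k + 1) → ℕ :=
  fun j => Multiset.count (k - (j : ℕ)) u


section Aux

lemma myLexTotal (l m : List ℕ) : List.Lex (· < ·) l m ∨ l = m ∨ List.Lex (· < ·) m l := by
  induction l generalizing m with
  | nil =>
    cases m with
    | nil => exact Or.inr (Or.inl rfl)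
    | cons b t => exact Or.inl List.Lex.nil
  | cons a l ih =>
    cases m with
    | nil => exact Or.inr (Or.inr List.Lex.nil)
    | cons b t =>
      rcases lt_trichotomy a b with h | h | h
      · exact Or.inl (List.Lex.rel h)
      · subst h
        rcases ih t with h | h | h
        · exact Or.inl (List.Lex.cons h)
        · exact Or.inr (Or.inl (by rw [h]))
        · exact Or.inr (Or.inr (List.Lex.cons h))
      · exact Or.inr (Or.inr (List.Lex.rel h))

lemma myVecLexLtAsymm {m : ℕ} {s t : Fin m → ℕ} (h1 : VecLexLt s t) (h2 : VecLexLt t s) :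
    False := by
  obtain ⟨j1, e1, l1⟩ := h1
  obtain ⟨j2, e2, l2⟩ := h2
  rcases lt_trichotomy j1 j2 with h | h | h
  · have := e2 j1 h; omega
  · subst h; omega
  · have := e1 j2 h; omega

lemma mySortedLe {a : ℕ} {l : List ℕ} (h : List.Pairwise (· ≥ ·) (a :: l)) :
    ∀ x ∈ a :: l, x ≤ a := by
  intro x hx
  rcases List.mem_cons.mp hx with rfl | hx
  · exact le_rfl
  · exact List.rel_of_pairwise_cons h hx

lemma myLexCount {l m : List ℕ} (h : List.Lex (· < ·) l m) :
    List.Pairwise (· ≥ ·) l → List.Pairwise (· ≥ ·) m →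
    ∃ c, (∀ d, c < d → l.count d = m.count d) ∧ l.count c < m.count c := by
  induction h with
  | @nil b t =>
    intro _ hm
    refine ⟨b, fun d hd => ?_, ?_⟩
    · rw [List.count_nil, eq_comm, List.count_eq_zero]
      intro hmem
      exact absurd (mySortedLe hm d hmem) (by omega)
    · simp [List.count_cons]
  | @cons a l₁ l₂ h ih =>
    intro hl hm
    obtain ⟨c, h1, h2⟩ := ih hl.of_cons hm.of_cons
    refine ⟨c, fun d hd => ?_, ?_⟩
    · simp [List.count_cons, h1 d hd]
    · simp only [List.count_cons]
      split <;> omega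
  | @rel a l₁ b l₂ hab =>
    intro hl hm
    refine ⟨b, fun d hd => ?_, ?_⟩
    · rw [List.count_eq_zero.mpr, List.count_eq_zero.mpr]
      · intro hmem; exact absurd (mySortedLe hm d hmem) (by omega)
      · intro hmem; have := mySortedLe hl d hmem; omega
    · rw [List.count_eq_zero.mpr]
      · simp [List.count_cons]
      · intro hmem; have := mySortedLe hl b hmem; omega

lemma mySortCount (u : Multiset ℕ) (d : ℕ) :
    (Multiset.sort u (· ≥ ·)).count d = Multiset.count d u := by
  rw [← Multiset.coe_count, Multiset.sort_eq]

lemma myLtToVec (k : ℕ) (u v : Multiset ℕ) (hv : ∀ a ∈ v, a ≤ k)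
    (h : List.Lex (· < ·) (Multiset.sort u (· ≥ ·)) (Multiset.sort v (· ≥ ·))) :
    VecLexLt (multVec k u) (multVec k v) := by
  obtain ⟨c, h1, h2⟩ := myLexCount h (Multiset.pairwise_sort _ _) (Multiset.pairwise_sort _ _)
  rw [mySortCount, mySortCount] at h2
  have hcv : c ∈ v := Multiset.count_pos.mp (by omega)
  have hck : c ≤ k := hv c hcv
  refine ⟨⟨k - c, by omega⟩, fun i hi => ?_, ?_⟩
  · have hi' : (i : ℕ) < k - c := hi
    have := h1 (k - (i : ℕ)) (by omega)
    rw [mySortCount, mySortCount] at this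
    exact this
  · show Multiset.count (k - (k - c)) u < Multiset.count (k - (k - c)) v
    have : k - (k - c) = c := by omega
    rw [this]; exact h2

lemma myVecInj (k : ℕ) (u v : Multiset ℕ) (hu : ∀ a ∈ u, a ≤ k) (hv : ∀ a ∈ v, a ≤ k)
    (h : multVec k u = multVec k v) : u = v := by
  ext d
  by_cases hd : d ≤ k
  · have := congrFun h ⟨k - d, by omega⟩
    simpa [multVec, Nat.sub_sub_self hd] using this
  · rw [Multiset.count_eq_zero.mpr, Multiset.count_eq_zero.mpr]
    · intro hm; exact hd (hv d hm)
    · intro hm; exact hd (hu d hm)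

lemma mySortInj (u v : Multiset ℕ) (h : Multiset.sort u (· ≥ ·) = Multiset.sort v (· ≥ ·)) :
    u = v := by
  rw [← Multiset.sort_eq u (· ≥ ·), ← Multiset.sort_eq v (· ≥ ·), h]

lemma myMmfIff (k : ℕ) (u v : Multiset ℕ) (hu : ∀ a ∈ u, a ≤ k) (hv : ∀ a ∈ v, a ≤ k) :
    MmfLe u v ↔ VecLexLe (multVec k u) (multVec k v) := by
  constructor
  · rintro (h | h)
    · exact Or.inl (by rw [mySortInj u v h])
    · exact Or.inr (myLtToVec k u v hv h)
  · rintro (h | h)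
    · exact Or.inl (by rw [myVecInj k u v hu hv h])
    · rcases myLexTotal (Multiset.sort u (· ≥ ·)) (Multiset.sort v (· ≥ ·)) with h' | h' | h'
      · exact Or.inr h'
      · exact Or.inl h'
      · exact absurd (myLtToVec k v u hu h') (fun h'' => myVecLexLtAsymm h h'')

end Aux


lemma myMultVecSum (k : ℕ) {α : Type*} [DecidableEq α] (w : α → Multiset ℕ) (S : Finset α) :
    multVec k (∑ e ∈ S, w e) = ∑ e ∈ S, multVec k (w e) := by
  funext j
  simp [multVec, Multiset.count_sum', Finset.sum_apply]

lemma myMemSumLe (k : ℕ) {α : Type*} [DecidableEq α] (w : α → Multiset ℕ)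
    (hw : ∀ e, ∀ a ∈ w e, a ≤ k) (S : Finset α) : ∀ a ∈ ∑ e ∈ S, w e, a ≤ k := by
  intro a ha
  rw [Multiset.mem_sum] at ha
  obtain ⟨e, _, he⟩ := ha
  exact hw e a he

/-- Let `E` (a finite type `α`) be the ground set, `w` assign to each element a
finite multiset over `{0,...,k}`, and `𝒮` be a nonempty collection of subsets
of `E`.  With `W(S) = ⊎_{e ∈ S} w(e)` and `F(S) = ∑_{e ∈ S} f(w(e)) ∈ ℕ^{k+1}`,
a solution `S ∈ 𝒮` minimizes `W` w.r.t. `⊑mmf` iff it minimizes `F` w.r.t. the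
lexicographic order on `ℕ^{k+1}`. -/
theorem mmf_min_iff_lex_min (k : ℕ) (α : Type*) [Fintype α] [DecidableEq α]
    (w : α → Multiset ℕ) (hw : ∀ e, ∀ a ∈ w e, a ≤ k)
    (𝒮 : Set (Finset α)) (h𝒮 : 𝒮.Nonempty) (S : Finset α) (hS : S ∈ 𝒮) :
    (∀ S' ∈ 𝒮, MmfLe (∑ e ∈ S, w e) (∑ e ∈ S', w e)) ↔
      (∀ S' ∈ 𝒮, VecLexLe (∑ e ∈ S, multVec k (w e)) (∑ e ∈ S', multVec k (w e))) := by
  constructor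
  · intro H S' hS'
    rw [← myMultVecSum, ← myMultVecSum]
    exact (myMmfIff k _ _ (myMemSumLe k w hw S) (myMemSumLe k w hw S')).mp (H S' hS')
  · intro H S' hS'
    refine (myMmfIff k _ _ (myMemSumLe k w hw S) (myMemSumLe k w hw S')).mpr ?_
    rw [myMultVecSum, myMultVecSum]
    exact H S' hS'
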